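/- Given two vectors u, v in ℝ², if ⟨u, v⟩ > 0 then there exists a unique matrix A in SL₂(ℝ) which is symmetric, positive-definite, and satisfies A u = v. -/

import Mathlib

open Matrix


/-- Given two vectors `u, v ∈ ℝ²` with `⟨u, v⟩ > 0`, there exists a unique matrix
`A ∈ SL₂(ℝ)` (i.e. `det A = 1`) which is symmetric, positive-definite, and
satisfies `A u = v`. -/
theorem statement0 (u v : Fin 2 → ℝ) (huv : 0 < u ⬝ᵥ v) :
    ∃! A : Matrix (Fin 2) (Fin 2) ℝ,
      A.det = 1 ∧ A.IsSymm ∧ (∀ x : Fin 2 → ℝ, x ≠ 0 → 0 < x ⬝ᵥ A.mulVec x) ∧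
        A.mulVec u = v := by
  set u0 := u 0 with hu0; set u1 := u 1 with hu1
  set v0 := v 0 with hv0; set v1 := v 1 with hv1
  have hs : 0 < u0 * v0 + u1 * v1 := by
    have := huv; rwa [dotProduct, Fin.sum_univ_two] at this
  set s : ℝ := u0 * v0 + u1 * v1 with hsdef
  have hs0 : s ≠ 0 := ne_of_gt hs
  refine ⟨!![(v0^2+u1^2)/s, (v0*v1-u0*u1)/s; (v0*v1-u0*u1)/s, (v1^2+u0^2)/s], ⟨?_, ?_, ?_, ?_⟩, ?_⟩
  · rw [Matrix.det_fin_two_of]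
    field_simp
    ring
  · rw [Matrix.IsSymm]
    ext i j
    fin_cases i <;> fin_cases j <;> simp
  · intro x hx
    rw [dotProduct, Fin.sum_univ_two]
    simp only [Matrix.mulVec, dotProduct, Fin.sum_univ_two, Matrix.of_apply,
      Matrix.cons_val', Matrix.cons_val_zero, Matrix.cons_val_one, Matrix.head_cons,
      Matrix.head_fin_const]
    have key : x 0 * ((v0^2+u1^2)/s * x 0 + (v0*v1-u0*u1)/s * x 1) +
        x 1 * ((v0*v1-u0*u1)/s * x 0 + (v1^2+u0^2)/s * x 1)
        = ((v0*(x 0)+v1*(x 1))^2 + (u1*(x 0)-u0*(x 1))^2) / s := by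
      field_simp; ring
    rw [key]
    apply div_pos _ hs
    rcases eq_or_ne (v0*(x 0)+v1*(x 1)) 0 with h1 | h1
    · rcases eq_or_ne (u1*(x 0)-u0*(x 1)) 0 with h2 | h2
      · exfalso
        apply hx
        have hx0 : x 0 = 0 := by
          have : s * (x 0) = u0 * (v0*(x 0)+v1*(x 1)) + v1 * (u1*(x 0)-u0*(x 1)) := by ring
          rw [h1, h2] at this; simp at this
          rcases this with h | h
          · exact absurd h hs0
          · exact h
        have hx1 : x 1 = 0 := by
          have : s * (x 1) = u1 * (v0*(x 0)+v1*(x 1)) - v0 * (u1*(x 0)-u0*(x 1)) := by ring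
          rw [h1, h2] at this; simp at this
          rcases this with h | h
          · exact absurd h hs0
          · exact h
        funext i; fin_cases i
        · exact hx0
        · exact hx1
      · positivity
    · positivity
  · funext i
    fin_cases i <;>
      simp only [Matrix.mulVec, dotProduct, Fin.sum_univ_two, Matrix.of_apply,
        Matrix.cons_val', Matrix.cons_val_zero, Matrix.cons_val_one, Matrix.head_cons,
        Matrix.head_fin_const, Fin.zero_eta, Fin.mk_one, ← hu0, ← hu1, ← hv0, ← hv1] <;>
      (field_simp; ring)
  · rintro B ⟨hdet, hsym, hpd, hmv⟩
    have hc : B 1 0 = B 0 1 := by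
      have := congrFun (congrFun hsym 0) 1
      simpa [Matrix.transpose_apply] using this
    set a := B 0 0 with ha; set b := B 0 1 with hb; set d := B 1 1 with hd
    have h1 : a * u0 + b * u1 = v0 := by
      have := congrFun hmv 0
      simpa [Matrix.mulVec, dotProduct, Fin.sum_univ_two] using this
    have h2 : b * u0 + d * u1 = v1 := by
      have := congrFun hmv 1
      simpa [Matrix.mulVec, dotProduct, Fin.sum_univ_two, hc] using this
    have h3 : a * d - b * b = 1 := by
      have := hdet
      rw [Matrix.det_fin_two, hc] at this
      linarith
    have e00 : a = (v0^2+u1^2)/s := by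
      rw [eq_div_iff hs0]
      linear_combination (v0 + b*u1) * h1 - a*u1 * h2 + u1^2 * h3
    have e01 : b = (v0*v1-u0*u1)/s := by
      rw [eq_div_iff hs0]
      linear_combination (d*u1) * h1 + (v0 - b*u1) * h2 - u0*u1 * h3
    have e11 : d = (v1^2+u0^2)/s := by
      rw [eq_div_iff hs0]
      linear_combination -(d*u0) * h1 + (v1 + b*u0) * h2 + u0^2 * h3
    rw [Matrix.eta_fin_two B, hc, ← ha, ← hb, ← hd, e00, e01, e11]
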